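/- Let S be the decomposable operator on L²(X,μ;H) with measurable field T. Then for μ-almost every ζ ∈ X, the spectrum of T(ζ) is contained in the spectrum of S: spectrum ℂ (T(ζ)) ⊆ spectrum ℂ S. -/

import Mathlib

open MeasureTheory

/-- `T` is a measurable field of bounded operators: pointwise measurable and
essentially bounded in operator norm. -/
def MeasurableFieldOfOperators {X : Type*} [MeasurableSpace X]
    {H : Type*} [NormedAddCommGroup H] [InnerProductSpace ℂ H]
    [MeasurableSpace H] [BorelSpace H]
    (μ : Measure X) (T : X → H →L[ℂ] H) : Prop :=
  (∀ x : H, Measurable fun ζ => T ζ x) ∧ ∃ C : ℝ, ∀ᵐ ζ ∂μ, ‖T ζ‖ ≤ C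

/-- `S` is the decomposable operator on `L²(X, μ; H)` with field `T`. -/
def IsDecomposableOperatorWith {X : Type*} [MeasurableSpace X]
    {H : Type*} [NormedAddCommGroup H] [InnerProductSpace ℂ H]
    (μ : Measure X) (S : Lp H 2 μ →L[ℂ] Lp H 2 μ) (T : X → H →L[ℂ] H) : Prop :=
  ∀ f : Lp H 2 μ, ∀ᵐ ζ ∂μ, (S f : X → H) ζ = T ζ ((f : X → H) ζ)

open Set ENNReal ContinuousLinearMap in
private lemma specaux_key {X : Type*} [MeasurableSpace X]
    {H : Type*} [NormedAddCommGroup H] [InnerProductSpace ℂ H]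
    [CompleteSpace H] [SecondCountableTopology H] [MeasurableSpace H] [BorelSpace H]
    {μ : Measure X} [SigmaFinite μ]
    (T : X → H →L[ℂ] H) (hT : ∀ x : H, Measurable fun ζ => T ζ x)
    (S : Lp H 2 μ →L[ℂ] Lp H 2 μ) (hS : IsDecomposableOperatorWith μ S T)
    (lam : ℂ) (hlam : lam ∉ spectrum ℂ S) :
    ∀ᵐ ζ ∂μ, IsUnit (algebraMap ℂ (H →L[ℂ] H) lam - T ζ) ∧
      ∀ y : H, ‖y‖ ≤ ‖Ring.inverse (algebraMap ℂ (Lp H 2 μ →L[ℂ] Lp H 2 μ) lam - S)‖ *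
        ‖(algebraMap ℂ (H →L[ℂ] H) lam - T ζ) y‖ := by
  set V : Lp H 2 μ →L[ℂ] Lp H 2 μ := algebraMap ℂ (Lp H 2 μ →L[ℂ] Lp H 2 μ) lam - S with hV
  set R : Lp H 2 μ →L[ℂ] Lp H 2 μ := Ring.inverse V with hR
  set c : ℝ := ‖R‖ with hc
  have hcnn : 0 ≤ c := norm_nonneg _
  have hu : IsUnit V := spectrum.notMem_iff.mp hlam
  have hRV : R * V = 1 := Ring.inverse_mul_cancel V hu
  have hVR : V * R = 1 := Ring.mul_inverse_cancel V hu
  have hb : ∀ f : Lp H 2 μ, ‖f‖ ≤ c * ‖V f‖ := by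
    intro f
    calc ‖f‖ = ‖R (V f)‖ := by rw [← ContinuousLinearMap.mul_apply, hRV, ContinuousLinearMap.one_apply]
    _ ≤ c * ‖V f‖ := R.le_opNorm _
  have hA : ∀ (ζ : X) (y : H), (algebraMap ℂ (H →L[ℂ] H) lam - T ζ) y = lam • y - T ζ y := by
    intro ζ y
    simp [Algebra.algebraMap_eq_smul_one, ContinuousLinearMap.sub_apply]
  have hdec : ∀ f : Lp H 2 μ, (V f : X → H) =ᵐ[μ]
      fun ζ => lam • (f : X → H) ζ - T ζ ((f : X → H) ζ) := by
    intro f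
    have h1 : V f = lam • f - S f := by
      rw [hV]
      simp [Algebra.algebraMap_eq_smul_one, ContinuousLinearMap.sub_apply]
    filter_upwards [hS f, Lp.coeFn_sub (lam • f) (S f), Lp.coeFn_smul lam f] with ζ h2 h3 h4
    rw [h1, h3, Pi.sub_apply, h4, Pi.smul_apply, h2]
  -- Step A : pointwise lower bound for fixed vector
  have stepA : ∀ x : H, ∀ᵐ ζ ∂μ, ‖x‖ ≤ c * ‖lam • x - T ζ x‖ := by
    intro x
    have hwmeas : Measurable fun ζ => lam • x - T ζ x := measurable_const.sub (hT x)
    have key2 : ∀ᵐ ζ ∂μ, ((‖x‖₊ : ℝ≥0∞)) ^ (2:ℝ) ≤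
        ((ENNReal.ofReal c) * (‖lam • x - T ζ x‖₊ : ℝ≥0∞)) ^ (2:ℝ) := by
      apply ae_le_of_forall_setLIntegral_le_of_sigmaFinite measurable_const
      intro s hs hμs
      set F : Lp H 2 μ := indicatorConstLp 2 hs hμs.ne x with hF
      have hIcoe : (F : X → H) =ᵐ[μ] s.indicator fun _ => x := indicatorConstLp_coeFn
      have hFe : eLpNorm (F : X → H) 2 μ = (‖x‖₊ : ℝ≥0∞) * (μ s) ^ (1/(2:ℝ)) := by
        rw [eLpNorm_congr_ae hIcoe, eLpNorm_indicator_const hs two_ne_zero ENNReal.ofNat_ne_top]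
        norm_num [enorm_eq_nnnorm]
      have hVF2 : (V F : X → H) =ᵐ[μ] s.indicator (fun ζ => lam • x - T ζ x) := by
        filter_upwards [hdec F, hIcoe] with ζ h1 h2
        rw [h1, h2]
        by_cases hζ : ζ ∈ s
        · rw [Set.indicator_of_mem hζ, Set.indicator_of_mem hζ]
        · rw [Set.indicator_of_notMem hζ, Set.indicator_of_notMem hζ]
          simp
      have hVFe : eLpNorm (V F : X → H) 2 μ =
          (∫⁻ ζ in s, (‖lam • x - T ζ x‖₊ : ℝ≥0∞) ^ (2:ℝ) ∂μ) ^ (1/(2:ℝ)) := by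
        rw [eLpNorm_congr_ae hVF2, eLpNorm_indicator_eq_eLpNorm_restrict hs,
          eLpNorm_eq_lintegral_rpow_enorm_toReal two_ne_zero ENNReal.ofNat_ne_top]
        norm_num [enorm_eq_nnnorm]
      have h5 : eLpNorm (F : X → H) 2 μ ≤ ENNReal.ofReal c * eLpNorm (V F : X → H) 2 μ := by
        have h6 : eLpNorm (F : X → H) 2 μ = ENNReal.ofReal ‖F‖ := by
          rw [Lp.norm_def, ENNReal.ofReal_toReal (Lp.eLpNorm_ne_top F)]
        have h7 : eLpNorm (V F : X → H) 2 μ = ENNReal.ofReal ‖V F‖ := by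
          rw [Lp.norm_def, ENNReal.ofReal_toReal (Lp.eLpNorm_ne_top (V F))]
        rw [h6, h7, ← ENNReal.ofReal_mul hcnn]
        exact ENNReal.ofReal_le_ofReal (hb F)
      rw [hFe, hVFe] at h5
      have h8 := ENNReal.rpow_le_rpow h5 (by norm_num : (0:ℝ) ≤ 2)
      rw [ENNReal.mul_rpow_of_nonneg _ _ (by norm_num : (0:ℝ) ≤ 2),
        ENNReal.mul_rpow_of_nonneg _ _ (by norm_num : (0:ℝ) ≤ 2),
        ← ENNReal.rpow_mul, ← ENNReal.rpow_mul,
        show (1/(2:ℝ))*2 = 1 by norm_num] at h8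
      simp only [ENNReal.rpow_one] at h8
      calc ∫⁻ _ in s, (‖x‖₊ : ℝ≥0∞) ^ (2:ℝ) ∂μ
          = (‖x‖₊ : ℝ≥0∞) ^ (2:ℝ) * μ s := setLIntegral_const s _
        _ ≤ ENNReal.ofReal c ^ (2:ℝ) * ∫⁻ ζ in s, (‖lam • x - T ζ x‖₊ : ℝ≥0∞) ^ (2:ℝ) ∂μ := h8
        _ = ∫⁻ ζ in s, (ENNReal.ofReal c * (‖lam • x - T ζ x‖₊ : ℝ≥0∞)) ^ (2:ℝ) ∂μ := by
            rw [← lintegral_const_mul _ ((hwmeas.nnnorm.coe_nnreal_ennreal).pow_const _)]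
            refine lintegral_congr fun ζ => ?_
            rw [ENNReal.mul_rpow_of_nonneg _ _ (by norm_num : (0:ℝ) ≤ 2)]
    filter_upwards [key2] with ζ hζ
    have h9 : (‖x‖₊ : ℝ≥0∞) ≤ ENNReal.ofReal c * (‖lam • x - T ζ x‖₊ : ℝ≥0∞) :=
      (ENNReal.rpow_le_rpow_iff (by norm_num : (0:ℝ) < 2)).mp hζ
    have h10 := ENNReal.toReal_mono (by finiteness) h9
    simpa [ENNReal.toReal_mul, ENNReal.toReal_ofReal hcnn] using h10
  -- Step A' : uniform over all vectors
  haveI : Nonempty H := ⟨0⟩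
  set yseq : ℕ → H := TopologicalSpace.denseSeq H with hyseq
  have hydense : DenseRange yseq := TopologicalSpace.denseRange_denseSeq H
  have stepA' : ∀ᵐ ζ ∂μ, ∀ y : H,
      ‖y‖ ≤ c * ‖(algebraMap ℂ (H →L[ℂ] H) lam - T ζ) y‖ := by
    filter_upwards [ae_all_iff.2 fun n => stepA (yseq n)] with ζ hζ
    intro y
    set A' : H →L[ℂ] H := algebraMap ℂ (H →L[ℂ] H) lam - T ζ with hA'
    have hcl : IsClosed {y : H | ‖y‖ ≤ c * ‖A' y‖} :=
      isClosed_le continuous_norm (continuous_const.mul A'.continuous.norm)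
    have hsubset : Set.range yseq ⊆ {y : H | ‖y‖ ≤ c * ‖A' y‖} := by
      rintro _ ⟨n, rfl⟩
      show ‖yseq n‖ ≤ c * ‖A' (yseq n)‖
      rw [hA ζ (yseq n)]
      exact hζ n
    have : Dense {y : H | ‖y‖ ≤ c * ‖A' y‖} := hydense.mono hsubset
    have huniv : {y : H | ‖y‖ ≤ c * ‖A' y‖} = Set.univ := by
      rw [← hcl.closure_eq]; exact this.closure_eq
    exact (huniv ▸ Set.mem_univ y : y ∈ {y : H | ‖y‖ ≤ c * ‖A' y‖})
  -- Step B : a.e. the range contains the dense sequence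
  have stepB : ∀ᵐ ζ ∂μ, ∀ k : ℕ,
      yseq k ∈ Set.range (algebraMap ℂ (H →L[ℂ] H) lam - T ζ) := by
    rw [ae_all_iff]
    intro k
    have hn : ∀ n : ℕ, ∀ᵐ ζ ∂μ, ζ ∈ spanningSets μ n →
        yseq k ∈ Set.range (algebraMap ℂ (H →L[ℂ] H) lam - T ζ) := by
      intro n
      set F : Lp H 2 μ := indicatorConstLp 2 (measurableSet_spanningSets μ n)
        (measure_spanningSets_lt_top μ n).ne (yseq k) with hF
      set g : Lp H 2 μ := R F with hg
      have hVg : V g = F := by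
        rw [hg, ← ContinuousLinearMap.mul_apply, hVR, ContinuousLinearMap.one_apply]
      filter_upwards [hdec g, (indicatorConstLp_coeFn :
        (F : X → H) =ᵐ[μ] (spanningSets μ n).indicator fun _ => yseq k)] with ζ h1 h2 hζmem
      refine ⟨(g : X → H) ζ, ?_⟩
      rw [hA]
      calc lam • (g : X → H) ζ - T ζ ((g : X → H) ζ) = (V g : X → H) ζ := h1.symm
        _ = (F : X → H) ζ := by rw [hVg]
        _ = yseq k := h2.trans (Set.indicator_of_mem hζmem _)
    filter_upwards [ae_all_iff.2 hn] with ζ hζ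
    have : ζ ∈ ⋃ n, spanningSets μ n := by rw [iUnion_spanningSets]; trivial
    obtain ⟨n, hn'⟩ := Set.mem_iUnion.mp this
    exact hζ n hn'
  -- Combine
  filter_upwards [stepA', stepB] with ζ h1 h2
  refine ⟨?_, h1⟩
  set A' : H →L[ℂ] H := algebraMap ℂ (H →L[ℂ] H) lam - T ζ with hA'
  have hanti : AntilipschitzWith c.toNNReal A' := by
    apply A'.antilipschitz_of_bound
    intro y
    rw [Real.coe_toNNReal c hcnn]
    exact h1 y
  have hinj : Function.Injective A' := hanti.injective
  have hclosed : IsClosed (Set.range A') := hanti.isClosed_range A'.uniformContinuous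
  have hsub : Set.range yseq ⊆ Set.range (A' : H → H) := by
    rintro _ ⟨n, rfl⟩
    exact h2 n
  have hdense : Dense (Set.range (A' : H → H)) := hydense.mono hsub
  have hsurj : Function.Surjective A' := by
    intro y
    have hy : y ∈ closure (Set.range (A' : H → H)) := hdense y
    rwa [hclosed.closure_eq] at hy
  have hker : LinearMap.ker (A' : H →ₗ[ℂ] H) = ⊥ := LinearMap.ker_eq_bot.mpr hinj
  have hrange : LinearMap.range (A' : H →ₗ[ℂ] H) = ⊤ := LinearMap.range_eq_top.mpr hsurj
  set e := ContinuousLinearEquiv.ofBijective A' hker hrange with he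
  refine ⟨⟨A', (e.symm : H →L[ℂ] H), ?_, ?_⟩, rfl⟩
  · ext y
    simp only [ContinuousLinearMap.mul_apply, ContinuousLinearMap.one_apply,
      ContinuousLinearEquiv.coe_coe]
    exact ContinuousLinearEquiv.ofBijective_apply_symm_apply A' hker hrange y
  · ext y
    simp only [ContinuousLinearMap.mul_apply, ContinuousLinearMap.one_apply,
      ContinuousLinearEquiv.coe_coe]
    exact ContinuousLinearEquiv.ofBijective_symm_apply_apply A' hker hrange y

set_option maxHeartbeats 1000000 in
theorem spectrum_of_fiber_subset_spectrum
    {X : Type*} [MeasurableSpace X] [StandardBorelSpace X]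
    {μ : Measure X} [SigmaFinite μ]
    {H : Type*} [NormedAddCommGroup H] [InnerProductSpace ℂ H]
    [CompleteSpace H] [SecondCountableTopology H] [MeasurableSpace H] [BorelSpace H]
    (T : X → H →L[ℂ] H) (hT : MeasurableFieldOfOperators μ T)
    (S : Lp H 2 μ →L[ℂ] Lp H 2 μ) (hS : IsDecomposableOperatorWith μ S T) :
    ∀ᵐ ζ ∂μ, spectrum ℂ (T ζ) ⊆ spectrum ℂ S := by
  rcases subsingleton_or_nontrivial H with hH | hH
  · refine Filter.Eventually.of_forall fun ζ z hz => ?_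
    exact absurd (isUnit_of_subsingleton _) (spectrum.mem_iff.mp hz)
  rcases eq_or_ne μ 0 with hμ | hμ
  · simp [hμ]
  -- a nonzero element of the Lp space
  obtain ⟨x0, hx0⟩ := exists_ne (0 : H)
  have hsp : ∃ n, μ (spanningSets μ n) ≠ 0 := by
    by_contra h
    push_neg at h
    have h1 : μ Set.univ = 0 := by
      rw [← iUnion_spanningSets μ]
      exact measure_iUnion_null h
    exact hμ (Measure.measure_univ_eq_zero.mp h1)
  obtain ⟨n0, hn0⟩ := hsp
  set F0 : Lp H 2 μ := indicatorConstLp 2 (measurableSet_spanningSets μ n0)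
    (measure_spanningSets_lt_top μ n0).ne x0 with hF0def
  have hF0 : F0 ≠ 0 := by
    intro h
    have hnorm := norm_indicatorConstLp (μ := μ) (s := spanningSets μ n0)
      (hs := measurableSet_spanningSets μ n0) (hμs := (measure_spanningSets_lt_top μ n0).ne)
      (c := x0) two_ne_zero ENNReal.ofNat_ne_top
    rw [← hF0def, h, norm_zero] at hnorm
    have hpos : 0 < ‖x0‖ * μ.real (spanningSets μ n0) ^ (1 / ENNReal.toReal 2) := by
      apply mul_pos (norm_pos_iff.mpr hx0)
      exact Real.rpow_pos_of_pos (ENNReal.toReal_pos hn0 (measure_spanningSets_lt_top μ n0).ne) _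
    rw [← hnorm] at hpos
    exact lt_irrefl _ hpos
  have hRpos : ∀ z : ℂ, z ∉ spectrum ℂ S →
      0 < ‖Ring.inverse (algebraMap ℂ (Lp H 2 μ →L[ℂ] Lp H 2 μ) z - S)‖ := by
    intro z hz
    rw [norm_pos_iff]
    intro h0
    have hu : IsUnit (algebraMap ℂ (Lp H 2 μ →L[ℂ] Lp H 2 μ) z - S) := spectrum.notMem_iff.mp hz
    have h1 := Ring.inverse_mul_cancel _ hu
    rw [h0, zero_mul] at h1
    apply hF0
    calc F0 = (1 : Lp H 2 μ →L[ℂ] Lp H 2 μ) F0 := (ContinuousLinearMap.one_apply F0).symm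
      _ = (0 : Lp H 2 μ →L[ℂ] Lp H 2 μ) F0 := by rw [← h1]
      _ = 0 := ContinuousLinearMap.zero_apply F0
  obtain ⟨Q, hQc, hQd⟩ := TopologicalSpace.exists_countable_dense ℂ
  have hρo : IsOpen ((spectrum ℂ S)ᶜ) := (spectrum.isClosed (𝕜 := ℂ) (A := Lp H 2 μ →L[ℂ] Lp H 2 μ) S).isOpen_compl
  set D : Set ℂ := (spectrum ℂ S)ᶜ ∩ Q with hD
  have hDc : D.Countable := hQc.mono Set.inter_subset_right
  have hae : ∀ᵐ ζ ∂μ, ∀ z ∈ D, IsUnit (algebraMap ℂ (H →L[ℂ] H) z - T ζ) ∧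
      ∀ y : H, ‖y‖ ≤ ‖Ring.inverse (algebraMap ℂ (Lp H 2 μ →L[ℂ] Lp H 2 μ) z - S)‖ *
        ‖(algebraMap ℂ (H →L[ℂ] H) z - T ζ) y‖ :=
    (MeasureTheory.ae_ball_iff hDc).mpr fun z hz => specaux_key T hT.1 S hS z hz.1
  filter_upwards [hae] with ζ hζ
  intro z hzT
  by_contra hzS
  set Rz := Ring.inverse (algebraMap ℂ (Lp H 2 μ →L[ℂ] Lp H 2 μ) z - S) with hRz
  have hcz : 0 < ‖Rz‖ := hRpos z hzS
  have hcont : ContinuousAt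
      (fun w : ℂ => Ring.inverse (algebraMap ℂ (Lp H 2 μ →L[ℂ] Lp H 2 μ) w - S)) z := by
    obtain ⟨u, hu'⟩ := spectrum.notMem_iff.mp hzS
    have h1 : ContinuousAt Ring.inverse (algebraMap ℂ (Lp H 2 μ →L[ℂ] Lp H 2 μ) z - S) := by
      rw [← hu']
      exact NormedRing.inverse_continuousAt u
    have h2 : ContinuousAt (fun w : ℂ => algebraMap ℂ (Lp H 2 μ →L[ℂ] Lp H 2 μ) w - S) z :=
      ((continuous_algebraMap ℂ (Lp H 2 μ →L[ℂ] Lp H 2 μ)).sub continuous_const).continuousAt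
    exact ContinuousAt.comp (g := Ring.inverse)
      (f := fun w : ℂ => algebraMap ℂ (Lp H 2 μ →L[ℂ] Lp H 2 μ) w - S) h1 h2
  have hev : ∀ᶠ w in nhds z,
      ‖Ring.inverse (algebraMap ℂ (Lp H 2 μ →L[ℂ] Lp H 2 μ) w - S)‖ < 2 * ‖Rz‖ := by
    have h1 : ContinuousAt
        (fun w : ℂ => ‖Ring.inverse (algebraMap ℂ (Lp H 2 μ →L[ℂ] Lp H 2 μ) w - S)‖) z :=
      hcont.norm
    exact h1.eventually (Iio_mem_nhds (by linarith : ‖Rz‖ < 2 * ‖Rz‖))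
  obtain ⟨δ, hδ, hδ'⟩ := Metric.eventually_nhds_iff.mp hev
  set ε : ℝ := min δ ((2 * ‖Rz‖)⁻¹) with hε
  have hεpos : 0 < ε := lt_min hδ (by positivity)
  have hzcl : z ∈ closure D := hQd.open_subset_closure_inter hρo hzS
  obtain ⟨w, hwD, hwz⟩ := Metric.mem_closure_iff.mp hzcl ε hεpos
  obtain ⟨hunit, hbound⟩ := hζ w hwD
  set cw := ‖Ring.inverse (algebraMap ℂ (Lp H 2 μ →L[ℂ] Lp H 2 μ) w - S)‖ with hcw
  have hcwlt : cw < 2 * ‖Rz‖ := hδ' (by rw [dist_comm]; exact lt_of_lt_of_le hwz (min_le_left _ _))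
  obtain ⟨u, huA⟩ := hunit
  have hBle : ‖((u⁻¹ : (H →L[ℂ] H)ˣ) : H →L[ℂ] H)‖ ≤ cw := by
    apply ContinuousLinearMap.opNorm_le_bound _ (norm_nonneg _)
    intro y
    have h8 := hbound (((u⁻¹ : (H →L[ℂ] H)ˣ) : H →L[ℂ] H) y)
    have h9 : (algebraMap ℂ (H →L[ℂ] H) w - T ζ) (((u⁻¹ : (H →L[ℂ] H)ˣ) : H →L[ℂ] H) y) = y := by
      rw [← huA, ← ContinuousLinearMap.mul_apply, u.mul_inv, ContinuousLinearMap.one_apply]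
    rwa [h9] at h8
  have hBpos : (0:ℝ) < ‖((u⁻¹ : (H →L[ℂ] H)ˣ) : H →L[ℂ] H)‖ := by
    rw [norm_pos_iff]
    intro h0
    have h1 : ((1 : H →L[ℂ] H)) = 0 := by rw [← u.inv_mul, h0, zero_mul]
    apply hx0
    calc x0 = (1 : H →L[ℂ] H) x0 := (ContinuousLinearMap.one_apply x0).symm
      _ = (0 : H →L[ℂ] H) x0 := by rw [h1]
      _ = 0 := ContinuousLinearMap.zero_apply x0
  have hdist : ‖(algebraMap ℂ (H →L[ℂ] H) z - T ζ) - (u : H →L[ℂ] H)‖ <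
      ‖((u⁻¹ : (H →L[ℂ] H)ˣ) : H →L[ℂ] H)‖⁻¹ := by
    rw [huA]
    have h1 : (algebraMap ℂ (H →L[ℂ] H) z - T ζ) - (algebraMap ℂ (H →L[ℂ] H) w - T ζ)
        = algebraMap ℂ (H →L[ℂ] H) (z - w) := by
      rw [map_sub]
      exact sub_sub_sub_cancel_right _ _ _
    rw [h1, norm_algebraMap']
    have h2 : ‖z - w‖ < ε := by rw [← dist_eq_norm]; exact hwz
    have h3 : ε ≤ (2 * ‖Rz‖)⁻¹ := min_le_right _ _
    have hcwpos : 0 < cw := lt_of_lt_of_le hBpos hBle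
    have h4 : (2 * ‖Rz‖)⁻¹ < cw⁻¹ := by
      apply inv_strictAnti₀ hcwpos hcwlt
    have h5 : cw⁻¹ ≤ ‖((u⁻¹ : (H →L[ℂ] H)ˣ) : H →L[ℂ] H)‖⁻¹ := by
      apply inv_anti₀ hBpos hBle
    linarith
  exact (spectrum.notMem_iff.mpr (u.ofNearby _ hdist).isUnit) hzT
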